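/- arXiv:2006.14018 — 2 statements merged into one kernel-verified Lean document; each statement's English description precedes it below -/
import Mathlib

section
/- If q ≥ π/2, then the equation z·e^{z} + q = 0 has at least one complex root z with nonnegative real part. -/
open Real

theorem stmt_8 (q : ℝ) (hq : Real.pi / 2 ≤ q) :
    ∃ z : ℂ, z * Complex.exp z + (q : ℂ) = 0 ∧ 0 ≤ z.re := by
  have hpi : (0:ℝ) < Real.pi := Real.pi_pos
  have hq0 : 0 < q := lt_of_lt_of_le (by positivity) hq
  -- Step 1: find b ∈ [2π/3, π) with sin b = π/(4q)
  have hsin23 : Real.sin (2*Real.pi/3) = Real.sqrt 3 / 2 := by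
    rw [show (2*Real.pi/3) = Real.pi - Real.pi/3 by ring, Real.sin_pi_sub,
      Real.sin_pi_div_three]
  have hcos23 : Real.cos (2*Real.pi/3) = -(1/2) := by
    rw [show (2*Real.pi/3) = Real.pi - Real.pi/3 by ring, Real.cos_pi_sub,
      Real.cos_pi_div_three]
  have hs_mem : Real.pi/(4*q) ∈ Set.Icc (Real.sin Real.pi) (Real.sin (2*Real.pi/3)) := by
    rw [Real.sin_pi, hsin23]
    constructor
    · positivity
    · have h1 : Real.pi/(4*q) ≤ 1/2 := by
        rw [div_le_div_iff₀ (by positivity) (by norm_num)]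
        linarith
      have h2 : (1:ℝ)/2 ≤ Real.sqrt 3 / 2 := by
        have : (1:ℝ) ≤ Real.sqrt 3 := by
          rw [show (1:ℝ) = Real.sqrt 1 by simp]
          exact Real.sqrt_le_sqrt (by norm_num)
        linarith
      linarith
  obtain ⟨b, hbmem, hbs⟩ := intermediate_value_Icc' (by linarith : 2*Real.pi/3 ≤ Real.pi)
    Real.continuous_sin.continuousOn hs_mem
  have hsb : Real.sin b = Real.pi/(4*q) := hbs
  have hsbpos : 0 < Real.sin b := by rw [hsb]; positivity
  have hblt : b < Real.pi := by
    rcases lt_or_eq_of_le hbmem.2 with h | h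
    · exact h
    · exfalso; rw [h, Real.sin_pi] at hsbpos; linarith
  have hbge : 2*Real.pi/3 ≤ b := hbmem.1
  have hcosb : Real.cos b ≤ -(1/2) := by
    rw [← hcos23]
    apply Real.cos_le_cos_of_nonneg_of_le_pi (by positivity) (le_of_lt hblt) hbge
  -- define R
  set R : ℝ → ℝ := fun t => Real.exp (-t * Real.cos t / Real.sin t) * t / Real.sin t with hR
  -- x(b) ≥ q and R b ≥ q
  have hxb : q ≤ -b * Real.cos b / Real.sin b := by
    rw [le_div_iff₀ hsbpos, hsb]
    have h1 : b * (1/2) ≤ -b * Real.cos b := by nlinarith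
    have h2 : q * (Real.pi / (4*q)) = Real.pi/4 := by field_simp
    rw [h2]
    nlinarith
  have hRb : q ≤ R b := by
    have hx0 : 0 ≤ -b * Real.cos b / Real.sin b := le_trans (le_of_lt hq0) hxb
    have hexp : -b * Real.cos b / Real.sin b ≤ Real.exp (-b * Real.cos b / Real.sin b) :=
      le_trans (by linarith) (Real.add_one_le_exp _)
    have hb1 : 1 ≤ b := by nlinarith [Real.pi_gt_three]
    have hsb1 : Real.sin b ≤ 1 := Real.sin_le_one b
    have hE : q ≤ Real.exp (-b * Real.cos b / Real.sin b) := le_trans hxb hexp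
    calc q ≤ Real.exp (-b * Real.cos b / Real.sin b) := hE
      _ = Real.exp (-b * Real.cos b / Real.sin b) * 1 / 1 := by ring
      _ ≤ R b := by
          rw [hR]
          apply div_le_div₀ (by positivity) ?_ hsbpos hsb1
          nlinarith [Real.exp_pos (-b * Real.cos b / Real.sin b)]
  -- continuity of R on [π/2, b]
  have hb2 : Real.pi/2 ≤ b := by linarith
  have hsinpos : ∀ t ∈ Set.Icc (Real.pi/2) b, 0 < Real.sin t := by
    intro t ht
    apply Real.sin_pos_of_pos_of_lt_pi (by linarith [ht.1]) (lt_of_le_of_lt ht.2 hblt)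
  have hcont : ContinuousOn R (Set.Icc (Real.pi/2) b) := by
    apply ContinuousOn.div
    · apply ContinuousOn.mul
      · apply Real.continuous_exp.comp_continuousOn
        apply ContinuousOn.div
        · exact (continuousOn_id.neg.mul Real.continuous_cos.continuousOn)
        · exact Real.continuous_sin.continuousOn
        · intro t ht; exact ne_of_gt (hsinpos t ht)
      · exact continuousOn_id
    · exact Real.continuous_sin.continuousOn
    · intro t ht; exact ne_of_gt (hsinpos t ht)
  have hRhalf : R (Real.pi/2) = Real.pi/2 := by
    rw [hR]
    simp [Real.sin_pi_div_two, Real.cos_pi_div_two]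
  have hqmem : q ∈ Set.Icc (R (Real.pi/2)) (R b) := by
    rw [hRhalf]; exact ⟨hq, hRb⟩
  obtain ⟨y, hymem, hyR⟩ := intermediate_value_Icc hb2 hcont hqmem
  have hsy : 0 < Real.sin y := hsinpos y hymem
  have hcy : Real.cos y ≤ 0 := by
    apply Real.cos_nonpos_of_pi_div_two_le_of_le hymem.1
    linarith [hymem.2, hblt]
  set x : ℝ := -y * Real.cos y / Real.sin y with hx
  have hx0 : 0 ≤ x := by
    apply div_nonneg ?_ (le_of_lt hsy)
    nlinarith [hymem.1]
  refine ⟨⟨x, y⟩, ?_, hx0⟩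
  have hxs : x * Real.sin y = -y * Real.cos y := by
    rw [hx]; field_simp
  have hRy : Real.exp x * y = q * Real.sin y := by
    have := hyR
    rw [hR] at this
    simp only [← hx] at this
    field_simp at this
    linarith [this]
  have hsc : Real.sin y ^ 2 + Real.cos y ^ 2 = 1 := Real.sin_sq_add_cos_sq y
  rw [Complex.ext_iff]
  constructor
  · simp only [Complex.add_re, Complex.mul_re, Complex.exp_re, Complex.exp_im,
      Complex.ofReal_re, Complex.zero_re]
    have hG : Real.sin y * (x * (Real.exp x * Real.cos y) - y * (Real.exp x * Real.sin y) + q) = 0 := by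
      linear_combination (Real.exp x * Real.cos y) * hxs - (y * Real.exp x) * hsc - hRy
    have h0 := (mul_eq_zero.mp hG).resolve_left (ne_of_gt hsy)
    linarith
  · simp only [Complex.add_im, Complex.mul_im, Complex.exp_re, Complex.exp_im,
      Complex.ofReal_im, Complex.zero_im]
    linear_combination Real.exp x * hxs
end

section
/- All complex roots of z·e^{z} + q = 0 have negative real part if 0 < q < π/2. -/
theorem stmt_9 (q : ℝ) (hq0 : 0 < q) (hq : q < Real.pi / 2) :
    ∀ z : ℂ, z * Complex.exp z + (q : ℂ) = 0 → z.re < 0 := by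
  intro z h
  by_contra hx
  push_neg at hx
  set x := z.re with hxdef
  set y := z.im with hydef
  have hzexp : z * Complex.exp z = -(q : ℂ) := by linear_combination h
  have habs : ‖z‖ * Real.exp x = q := by
    have h2 := congrArg (‖·‖) hzexp
    simpa [Complex.norm_exp, abs_of_pos hq0] using h2
  have hex : (1 : ℝ) ≤ Real.exp x := Real.one_le_exp hx
  have hzabs : ‖z‖ ≤ q := by nlinarith [norm_nonneg z]
  have hyq : |y| ≤ q := le_trans (Complex.abs_im_le_norm z) hzabs
  have hy2 : |y| < Real.pi / 2 := lt_of_le_of_lt hyq hq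
  have hy2' := abs_lt.mp hy2
  have hcos : 0 < Real.cos y :=
    Real.cos_pos_of_mem_Ioo ⟨by linarith [hy2'.1], hy2'.2⟩
  have hpi : Real.pi / 2 ≤ Real.pi := by linarith [Real.pi_pos]
  have hysin : 0 ≤ y * Real.sin y := by
    rcases le_or_gt 0 y with hy0 | hy0
    · exact mul_nonneg hy0 (Real.sin_nonneg_of_nonneg_of_le_pi hy0 (by linarith [hy2'.2]))
    · have hs : Real.sin y ≤ 0 := by
        have h3 := Real.sin_nonneg_of_nonneg_of_le_pi (x := -y) (by linarith) (by linarith [hy2'.1])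
        rw [Real.sin_neg] at h3; linarith
      nlinarith
  have hre := congrArg Complex.re hzexp
  have him := congrArg Complex.im hzexp
  simp only [Complex.mul_re, Complex.mul_im, Complex.exp_re, Complex.exp_im,
    Complex.neg_re, Complex.neg_im, Complex.ofReal_re, Complex.ofReal_im,
    ← hxdef, ← hydef, neg_zero] at hre him
  have hexpos : 0 < Real.exp x := Real.exp_pos x
  rcases eq_or_ne y 0 with hy0 | hy0
  · rw [hy0] at hre
    simp [Real.cos_zero, Real.sin_zero] at hre
    nlinarith
  · have hysq : 0 < y ^ 2 := by positivity
    nlinarith [mul_nonneg hx hysin, mul_pos (mul_pos hysq hcos) hexpos,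
      mul_nonneg (mul_nonneg hx hysin) (le_of_lt hexpos)]
end
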